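/- Let u, v, d ∈ ℕ, let M be a u × v first entries matrix with real entries all of whose first entries are ≥ 1, and suppose M has a constant column (a column with all entries equal to some c > 0). Let C ⊆ ℝ⁺ be such that for every finite set F of real sequences converging to 0 and every δ > 0 there exist m ∈ (0,δ) and finite nonempty H ⊆ ℕ with m + Σ_{t∈H} f(t) ∈ C for all f ∈ F. Then for every u × d real matrix B, every sequence (b(n)) in (ℝ⁺)ᵈ converging to 0, and every δ > 0, there exist x ∈ (0,δ)ᵛ and y ∈ FS((b(n))ₙ) such that all entries of Mx + By lie in C. -/
import Mathlib


open Filter Set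

attribute [local instance] Ultrafilter.add Ultrafilter.addSemigroup

/-- The finite sums `FS((b(n))ₙ) = {∑_{n∈H} b(n) : H ⊆ ℕ finite nonempty}`. -/
def FS {α : Type*} [AddCommMonoid α] (b : ℕ → α) : Set α :=
  {y | ∃ H : Finset ℕ, H.Nonempty ∧ y = ∑ t ∈ H, b t}

/-- `C ⊆ ℝ⁺` is a J-set near zero: for every finite set of positive sequences converging to `0`
and every `δ > 0`, there exist `a ∈ (0,δ)` and a finite nonempty `H ⊆ ℕ` with
`a + ∑_{t∈H} f(t) ∈ C` for every `f` in the family. -/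
def JSetNearZero (C : Set ℝ) : Prop :=
  ∀ F : Finset (ℕ → ℝ),
    (∀ f ∈ F, (∀ n, 0 < f n) ∧ Tendsto f atTop (nhds 0)) →
    ∀ δ : ℝ, 0 < δ →
      ∃ a ∈ Set.Ioo (0:ℝ) δ, ∃ H : Finset ℕ, H.Nonempty ∧
        ∀ f ∈ F, a + ∑ t ∈ H, f t ∈ C

/-- `E ⊆ (ℝ⁺)ᵛ` is a J-set near zero. -/
def JSetNearZeroV (v : ℕ) (E : Set (Fin v → ℝ)) : Prop :=
  ∀ F : Finset (ℕ → Fin v → ℝ),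
    (∀ f ∈ F, (∀ n i, 0 < f n i) ∧ ∀ i, Tendsto (fun n => f n i) atTop (nhds 0)) →
    ∀ δ : ℝ, 0 < δ →
      ∃ a : Fin v → ℝ, (∀ i, a i ∈ Set.Ioo (0:ℝ) δ) ∧ ∃ H : Finset ℕ, H.Nonempty ∧
        ∀ f ∈ F, a + ∑ t ∈ H, f t ∈ E

/-- `C ⊆ ℝ⁺` is a C-set near zero: `C` belongs to some idempotent ultrafilter `p ∈ 0⁺(ℝ⁺)` all
of whose members are J-sets near zero (i.e. `p ∈ J₀(ℝ⁺)`). -/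
def CSetNearZero (C : Set ℝ) : Prop :=
  ∃ p : Ultrafilter ℝ, p + p = p ∧ (∀ ε : ℝ, 0 < ε → Set.Ioo 0 ε ∈ p) ∧ C ∈ p ∧
    ∀ A ∈ p, JSetNearZero A

/-- `E ⊆ (ℝ⁺)ᵛ` is a C-set near zero: there is an idempotent in `cl(E) ∩ J₀((ℝ⁺)ᵛ)`. -/
def CSetNearZeroV (v : ℕ) (E : Set (Fin v → ℝ)) : Prop :=
  ∃ p : Ultrafilter (Fin v → ℝ), p + p = p ∧
    (∀ ε : ℝ, 0 < ε → {x : Fin v → ℝ | ∀ i, 0 < x i ∧ x i < ε} ∈ p) ∧ E ∈ p ∧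
    ∀ A ∈ p, JSetNearZeroV v A

/-- `U ⊆ (ℝ⁺)ᵈ` is a weak IP-set near zero: it contains `FS` of a sequence in `(ℝ⁺)ᵈ`
converging to zero. -/
def WeakIPNearZero (d : ℕ) (U : Set (Fin d → ℝ)) : Prop :=
  ∃ b : ℕ → Fin d → ℝ, (∀ n i, 0 < b n i) ∧
    (∀ i, Tendsto (fun n => b n i) atTop (nhds 0)) ∧ FS b ⊆ U

/-- `M` is image partition regular over `ℝ⁺`: for every finite coloring of `ℝ⁺` there is
`x ∈ (ℝ⁺)ᵛ` with all entries of `Mx` in `ℝ⁺` and monochromatic. -/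
def IPR (u v : ℕ) (M : Matrix (Fin u) (Fin v) ℝ) : Prop :=
  ∀ r : ℕ, 0 < r → ∀ c : ℝ → Fin r,
    ∃ x : Fin v → ℝ, (∀ j, 0 < x j) ∧ (∀ i, 0 < M.mulVec x i) ∧
      ∃ k : Fin r, ∀ i, c (M.mulVec x i) = k

/-- `M` is image partition regular over `ℝ⁺` near zero: for every finite coloring of `ℝ⁺` and
every `δ > 0` there is `x ∈ (ℝ⁺)ᵛ` with the entries of `Mx` monochromatic and in `(0,δ)`. -/
def IPRNearZero (u v : ℕ) (M : Matrix (Fin u) (Fin v) ℝ) : Prop :=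
  ∀ r : ℕ, 0 < r → ∀ c : ℝ → Fin r, ∀ δ : ℝ, 0 < δ →
    ∃ x : Fin v → ℝ, (∀ j, 0 < x j) ∧ (∀ i, M.mulVec x i ∈ Set.Ioo 0 δ) ∧
      ∃ k : Fin r, ∀ i, c (M.mulVec x i) = k

/-- `B` is a first entries matrix: no row is zero, the first nonzero entry of each row is
positive, and first nonzero entries occurring in the same column are equal. -/
def FirstEntriesMatrix {u m : ℕ} (B : Matrix (Fin u) (Fin m) ℝ) : Prop :=
  (∀ i, ∃ j, B i j ≠ 0) ∧
  (∀ i j, (∀ k, k < j → B i k = 0) → B i j ≠ 0 → 0 < B i j) ∧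
  (∀ i i' j, (∀ k, k < j → B i k = 0) → (∀ k, k < j → B i' k = 0) →
    B i j ≠ 0 → B i' j ≠ 0 → B i j = B i' j)

/-- constant-column case of Theorem 3.11 for first entries matrices. -/
theorem firstEntries_constant_column (u v d : ℕ)
    (M : Matrix (Fin u) (Fin v) ℝ) (hFE : FirstEntriesMatrix M)
    (hge1 : ∀ i j, (∀ k, k < j → M i k = 0) → M i j ≠ 0 → 1 ≤ M i j)
    (hconst : ∃ j : Fin v, ∃ c : ℝ, 0 < c ∧ ∀ i, M i j = c)
    (C : Set ℝ)
    (hCJ : ∀ F : Finset (ℕ → ℝ), (∀ f ∈ F, Tendsto f atTop (nhds 0)) →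
      ∀ δ : ℝ, 0 < δ → ∃ m ∈ Set.Ioo (0:ℝ) δ, ∃ H : Finset ℕ, H.Nonempty ∧
        ∀ f ∈ F, m + ∑ t ∈ H, f t ∈ C) :
    ∀ B : Matrix (Fin u) (Fin d) ℝ,
      ∀ b : ℕ → Fin d → ℝ, (∀ n i, 0 < b n i) →
        (∀ i, Tendsto (fun n => b n i) atTop (nhds 0)) →
        ∀ δ : ℝ, 0 < δ →
          ∃ x : Fin v → ℝ, (∀ j, x j ∈ Set.Ioo (0:ℝ) δ) ∧
            ∃ y ∈ FS b, ∀ i, M.mulVec x i + B.mulVec y i ∈ C := by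
  classical
  obtain ⟨j₀, c, hc, hcol⟩ := hconst
  intro B b hbpos hbtend δ hδ
  set ε : ℕ → ℝ := fun n => (δ/4) * (1/2)^n with hεdef
  set f : Fin u → ℕ → ℝ :=
    fun i n => (∑ j ∈ Finset.univ.erase j₀, M i j) * ε n + B.mulVec (b n) i with hfdef
  have hεtend : Tendsto ε atTop (nhds 0) := by
    have h1 : Tendsto (fun n : ℕ => ((1:ℝ)/2)^n) atTop (nhds 0) :=
      tendsto_pow_atTop_nhds_zero_of_lt_one (by norm_num) (by norm_num)
    have h2 := h1.const_mul (δ/4)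
    rw [hεdef]
    simpa using h2
  have hftend : ∀ i, Tendsto (f i) atTop (nhds 0) := by
    intro i
    have h2 : Tendsto (fun n => B.mulVec (b n) i) atTop (nhds 0) := by
      have : Tendsto (fun n => ∑ k : Fin d, B i k * b n k) atTop
          (nhds (∑ k : Fin d, B i k * 0)) :=
        tendsto_finset_sum _ (fun k _ => (hbtend k).const_mul (B i k))
      simpa [Matrix.mulVec, dotProduct] using this
    have h3 := (hεtend.const_mul (∑ j ∈ Finset.univ.erase j₀, M i j)).add h2
    rw [hfdef]
    simpa [hεdef] using h3
  obtain ⟨m, hm, H, hH, hmem⟩ := hCJ (Finset.image f Finset.univ)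
    (by intro g hg; obtain ⟨i, _, rfl⟩ := Finset.mem_image.1 hg; exact hftend i)
    (min δ (c*δ)) (lt_min hδ (mul_pos hc hδ))
  set S : ℝ := ∑ t ∈ H, ε t with hSdef
  have hSpos : 0 < S := Finset.sum_pos (fun t _ => by positivity) hH
  have hSlt : S < δ := by
    have hsummable : Summable (fun n : ℕ => (δ/4) * (1/2:ℝ)^n) :=
      (summable_geometric_of_lt_one (by norm_num) (by norm_num)).mul_left _
    have hle : S ≤ ∑' n : ℕ, (δ/4) * (1/2:ℝ)^n :=
      Summable.sum_le_tsum H (fun n _ => by positivity) hsummable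
    have htsum : ∑' n : ℕ, (δ/4) * (1/2:ℝ)^n = δ/2 := by
      rw [tsum_mul_left, tsum_geometric_of_lt_one (by norm_num) (by norm_num)]
      have h4 : ((1:ℝ) - 1/2)⁻¹ = 2 := by norm_num
      rw [h4]; ring
    rw [htsum] at hle
    linarith
  set x : Fin v → ℝ := fun j => if j = j₀ then m/c else S with hxdef
  refine ⟨x, ?_, ∑ t ∈ H, b t, ⟨H, hH, rfl⟩, ?_⟩
  · intro j
    by_cases hj : j = j₀
    · constructor
      · simp only [hxdef, hj, if_pos rfl]
        exact div_pos hm.1 hc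
      · simp only [hxdef, hj, if_pos rfl]
        rw [div_lt_iff₀ hc]
        have := hm.2
        have h3 : m < c * δ := lt_of_lt_of_le this (min_le_right _ _)
        linarith [h3]
    · simp only [hxdef, if_neg hj]
      exact ⟨hSpos, hSlt⟩
  · intro i
    have hMx : M.mulVec x i = m + (∑ j ∈ Finset.univ.erase j₀, M i j) * S := by
      have : M.mulVec x i = ∑ j : Fin v, M i j * x j := rfl
      rw [this, ← Finset.add_sum_erase _ (fun j => M i j * x j) (Finset.mem_univ j₀)]
      have h1 : M i j₀ * x j₀ = m := by
        simp only [hxdef, if_pos rfl, hcol i]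
        field_simp
      have h2 : ∑ j ∈ Finset.univ.erase j₀, M i j * x j
          = (∑ j ∈ Finset.univ.erase j₀, M i j) * S := by
        rw [Finset.sum_mul]
        refine Finset.sum_congr rfl (fun j hj => ?_)
        rw [hxdef]
        simp [Finset.ne_of_mem_erase hj]
      rw [h1, h2]
    have hBy : B.mulVec (∑ t ∈ H, b t) i = ∑ t ∈ H, B.mulVec (b t) i := by
      calc B.mulVec (∑ t ∈ H, b t) i = ∑ k : Fin d, B i k * (∑ t ∈ H, b t k) := by
            simp [Matrix.mulVec, dotProduct]
        _ = ∑ k : Fin d, ∑ t ∈ H, B i k * b t k := by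
            refine Finset.sum_congr rfl (fun k _ => ?_); rw [Finset.mul_sum]
        _ = ∑ t ∈ H, ∑ k : Fin d, B i k * b t k := Finset.sum_comm
        _ = ∑ t ∈ H, B.mulVec (b t) i := rfl
    have hsplit : ∑ t ∈ H, f i t
        = (∑ j ∈ Finset.univ.erase j₀, M i j) * S + ∑ t ∈ H, B.mulVec (b t) i := by
      rw [hSdef, Finset.mul_sum, ← Finset.sum_add_distrib]
    have key : M.mulVec x i + B.mulVec (∑ t ∈ H, b t) i = m + ∑ t ∈ H, f i t := by
      rw [hMx, hBy, hsplit]; ring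
    rw [key]
    exact hmem (f i) (Finset.mem_image_of_mem f (Finset.mem_univ i))
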